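/- The K-vector space H of forests of planar rooted trees with operations * and ≻ is the free Hoch-algebra on one generator: for every Hoch-algebra (G, *_G, ≻_G) over K and every element g ∈ G, there exists a unique K-linear map φ : H → G such that φ(|) = g, φ(x * y) = φ(x) *_G φ(y) and φ(x ≻ y) = φ(x) ≻_G φ(y) for all x, y ∈ H. -/

import Mathlib

open scoped TensorProduct

/-- Planar rooted trees: a tree is either the leaf `|`, or a grafting of at
least two planar rooted trees (`graft t₁ t₂ rest` represents `[t₁, t₂, rest…]`). -/
inductive PTree : Type
  | leaf : PTree
  | graft (t₁ t₂ : PTree) (rest : List PTree) : PTree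

/-- A forest is a nonempty word of planar rooted trees. -/
abbrev Forest : Type := {l : List PTree // l ≠ []}

/-- Grafting of a list of trees (only meaningful on lists of length ≥ 2;
on shorter lists we return a junk value, which is never used). -/
def graftList : List PTree → PTree
  | [] => .leaf
  | [a] => a
  | a :: b :: rest => .graft a b rest

mutual
/-- Number of leaves of a planar rooted tree. -/
def leavesT : PTree → ℕ
  | .leaf => 1
  | .graft a b rest => leavesT a + leavesT b + leavesL rest

/-- Sum of the numbers of leaves of a list of trees. -/
def leavesL : List PTree → ℕ
  | [] => 0
  | t :: ts => leavesT t + leavesL ts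
end

/-- Number of leaves of a forest. -/
def leavesF (w : Forest) : ℕ := leavesL w.1

variable (K : Type*) [Field K]

/-- `H K` is the free `K`-vector space with basis the set of forests of
planar rooted trees. -/
abbrev H : Type _ := Forest →₀ K

/-- The leaf, as a (one-tree) forest. -/
def leafF : Forest := ⟨[PTree.leaf], by simp⟩

/-- The concatenation product `*`, as a bilinear map on `H K`;
on basis forests it is concatenation of words. -/
noncomputable def mulH : H K →ₗ[K] H K →ₗ[K] H K :=
  Finsupp.lift (H K →ₗ[K] H K) K Forest fun x =>
    Finsupp.lift (H K) K Forest fun y =>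
      Finsupp.single ⟨x.1 ++ y.1, by simp [x.2]⟩ 1

/-- The grafting operation `≻` on two basis forests:
`(t₁…tₚ) ≻ (s₁…s_q) = Σ_{k=1}^{q} Σ_{i=0}^{p−1}
t₁…t_{p−(i+1)} [t_{p−i},…,tₚ, s₁,…,s_k] s_{k+1}…s_q`. -/
noncomputable def succForest (x y : Forest) : H K :=
  ∑ k ∈ Finset.range y.1.length, ∑ i ∈ Finset.range x.1.length,
    Finsupp.single
      ⟨x.1.take (x.1.length - (i + 1)) ++
        (graftList (x.1.drop (x.1.length - (i + 1)) ++ y.1.take (k + 1)) :: y.1.drop (k + 1)),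
        by simp⟩ 1

/-- The operation `≻`, as a bilinear map on `H K`. -/
noncomputable def succH : H K →ₗ[K] H K →ₗ[K] H K :=
  Finsupp.lift (H K →ₗ[K] H K) K Forest fun x =>
    Finsupp.lift (H K) K Forest fun y => succForest K x y


section FreeHoch

theorem one_le_leavesT : ∀ t, 1 ≤ leavesT t
  | .leaf => le_refl 1
  | .graft a b r => by have := one_le_leavesT a; simp [leavesT]; omega

theorem leavesL_append (a b : List PTree) : leavesL (a ++ b) = leavesL a + leavesL b := by
  induction a with
  | nil => simp [leavesL]
  | cons t ts ih => simp [leavesL, ih]; omega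

theorem one_le_leavesL {l : List PTree} (h : l ≠ []) : 1 ≤ leavesL l := by
  cases l with
  | nil => simp at h
  | cons t ts => have := one_le_leavesT t; simp [leavesL]; omega

theorem leavesT_graftList_cons (a : PTree) {l : List PTree} (h : l ≠ []) :
    leavesT (graftList (a :: l)) = leavesT a + leavesL l := by
  cases l with
  | nil => simp at h
  | cons b r => simp [graftList, leavesT, leavesL]; omega

theorem leavesL_cons (t : PTree) (l : List PTree) : leavesL (t :: l) = leavesT t + leavesL l := rfl

theorem take_drop_leaves (l : List PTree) (n : ℕ) :
    leavesL (l.take n) + leavesL (l.drop n) = leavesL l := by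
  rw [← leavesL_append, List.take_append_drop]

theorem dec1 (t₁ t₂ : PTree) (rest : List PTree) :
    2 * leavesL (t₂ :: rest) + 1 < 2 * leavesT (.graft t₁ t₂ rest) := by
  have := one_le_leavesT t₁; simp [leavesT, leavesL]; omega

theorem dec2 (t₁ t₂ : PTree) (rest : List PTree) {k : ℕ} (hk : k < rest.length) :
    2 * leavesT (graftList (t₁ :: (t₂ :: rest).take (k + 1))) < 2 * leavesT (.graft t₁ t₂ rest) := by
  rw [leavesT_graftList_cons _ (by simp)]
  have h2 := take_drop_leaves (t₂ :: rest) (k+1)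
  have h3 : (t₂ :: rest).drop (k+1) ≠ [] := by
    simp [List.drop_eq_nil_iff]; omega
  have h4 := one_le_leavesL h3
  have h5 : leavesT (PTree.graft t₁ t₂ rest) = leavesT t₁ + leavesL (t₂ :: rest) := by
    simp [leavesT, leavesL]; omega
  omega

theorem dec3 (t₁ t₂ : PTree) (rest : List PTree) {k : ℕ} (hk : k < rest.length) :
    2 * leavesL ((t₂ :: rest).drop (k + 1)) + 1 < 2 * leavesT (.graft t₁ t₂ rest) := by
  have h2 := take_drop_leaves (t₂ :: rest) (k+1)
  have h4 := one_le_leavesL (l := (t₂ :: rest).take (k+1)) (by simp)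
  have h6 := one_le_leavesT t₁
  have h5 : leavesT (PTree.graft t₁ t₂ rest) = leavesT t₁ + leavesL (t₂ :: rest) := by
    simp [leavesT, leavesL]; omega
  omega

section
variable {R : Type*} [Field R] {G : Type*} [AddCommGroup G] [Module R G]
variable (m s : G →ₗ[R] G →ₗ[R] G) (g : G)

mutual
noncomputable def fT : PTree → G
  | .leaf => g
  | .graft t₁ t₂ rest =>
      s (fT t₁) (fL (t₂ :: rest)) -
        ∑ k ∈ (Finset.range rest.length).attach,
          m (fT (graftList (t₁ :: (t₂ :: rest).take (k.1 + 1))))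
            (fL ((t₂ :: rest).drop (k.1 + 1)))
termination_by t => 2 * leavesT t
decreasing_by
  · have := one_le_leavesT t₂; have h := one_le_leavesL (l := rest)
    simp [leavesT]; omega
  · exact dec1 t₁ t₂ rest
  · exact dec2 t₁ t₂ rest (Finset.mem_range.mp k.2)
  · exact dec3 t₁ t₂ rest (Finset.mem_range.mp k.2)
noncomputable def fL : List PTree → G
  | [] => 0
  | [t] => fT t
  | t :: ts => m (fT t) (fL ts)
termination_by l => 2 * leavesL l + 1
decreasing_by
  · simp [leavesL]
  · simp [leavesL]
  · have := one_le_leavesT t; simp [leavesL]; omega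
end

theorem fT_graft (t₁ t₂ : PTree) (rest : List PTree) :
    fT m s g (.graft t₁ t₂ rest) =
      s (fT m s g t₁) (fL m s g (t₂ :: rest)) -
        ∑ k ∈ Finset.range rest.length,
          m (fT m s g (graftList (t₁ :: (t₂ :: rest).take (k + 1))))
            (fL m s g ((t₂ :: rest).drop (k + 1))) := by
  rw [fT]
  congr 1
  rw [← Finset.sum_attach (Finset.range rest.length)]

theorem fL_cons (t : PTree) {l : List PTree} (h : l ≠ []) :
    fL m s g (t :: l) = m (fT m s g t) (fL m s g l) := by
  cases l with
  | nil => exact absurd rfl h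
  | cons a as => rw [fL]; simp

theorem fL_singleton (t : PTree) : fL m s g [t] = fT m s g t := by rw [fL]

theorem fL_append (hassoc : ∀ x y z : G, m (m x y) z = m x (m y z))
    (a : List PTree) (ha : a ≠ []) {b : List PTree} (hb : b ≠ []) :
    fL m s g (a ++ b) = m (fL m s g a) (fL m s g b) := by
  induction a with
  | nil => exact absurd rfl ha
  | cons t ts ih =>
    cases ts with
    | nil => rw [List.singleton_append, fL_cons m s g t hb, fL_singleton]
    | cons t' ts' =>
      rw [List.cons_append, fL_cons m s g t (by simp), ih (by simp),
        fL_cons m s g t (by simp), hassoc]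


theorem succ_single (t : PTree) {y : List PTree} (hy : y ≠ []) :
    s (fT m s g t) (fL m s g y) =
      ∑ k ∈ Finset.range y.length,
        fL m s g (graftList (t :: y.take (k + 1)) :: y.drop (k + 1)) := by
  cases y with
  | nil => exact absurd rfl hy
  | cons a ys =>
    have hlen : (a :: ys).length = ys.length + 1 := rfl
    rw [hlen, Finset.sum_range_succ]
    have htake : (a :: ys).take (ys.length + 1) = a :: ys := by
      simp
    have hdrop : (a :: ys).drop (ys.length + 1) = [] := by
      simp
    rw [htake, hdrop]
    have hgl : graftList (t :: a :: ys) = PTree.graft t a ys := rfl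
    rw [fL_singleton, hgl, fT_graft]
    rw [Finset.sum_congr rfl (fun k hk => ?_)]
    · abel
    · have hk' : k < ys.length := Finset.mem_range.mp hk
      apply fL_cons
      simp only [ne_eq, List.drop_eq_nil_iff]
      simp
      omega

theorem main_lemma (hassoc : ∀ x y z : G, m (m x y) z = m x (m y z))
    (hcocycle : ∀ x y z : G, m (s x y) z + s (m x y) z = s x (m y z) + m x (s y z))
    (y : List PTree) (hy : y ≠ []) :
    ∀ x : List PTree, x ≠ [] →
    s (fL m s g x) (fL m s g y) =
      ∑ k ∈ Finset.range y.length, ∑ i ∈ Finset.range x.length,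
        fL m s g (x.take (x.length - (i + 1)) ++
          graftList (x.drop (x.length - (i + 1)) ++ y.take (k + 1)) :: y.drop (k + 1)) := by
  intro x
  induction x with
  | nil => intro h; exact absurd rfl h
  | cons t x' ih =>
    intro _
    by_cases hx' : x' = []
    · subst hx'
      rw [fL_singleton, succ_single m s g t hy]
      apply Finset.sum_congr rfl
      intro k hk
      simp only [List.length_singleton, Finset.sum_range_one, Nat.sub_self,
        List.take_zero, List.drop_zero, List.nil_append, List.singleton_append]
    · have hy' : (x' ++ y) ≠ [] := by simp [hx']
      have e0 : fL m s g (t :: x') = m (fT m s g t) (fL m s g x') := fL_cons m s g t hx'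
      have e1 : s (m (fT m s g t) (fL m s g x')) (fL m s g y)
          = s (fT m s g t) (m (fL m s g x') (fL m s g y))
            + m (fT m s g t) (s (fL m s g x') (fL m s g y))
            - m (s (fT m s g t) (fL m s g x')) (fL m s g y) :=
        eq_sub_of_add_eq' (hcocycle _ _ _)
      rw [e0, e1]
      have hT1 : s (fT m s g t) (m (fL m s g x') (fL m s g y)) =
          (∑ j ∈ Finset.range x'.length,
            fL m s g (graftList (t :: x'.take (j + 1)) :: (x'.drop (j + 1) ++ y)))
          + ∑ k ∈ Finset.range y.length,
            fL m s g (graftList ((t :: x') ++ y.take (k + 1)) :: y.drop (k + 1)) := by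
        rw [← fL_append m s g hassoc x' hx' hy, succ_single m s g t hy',
          show (x' ++ y).length = x'.length + y.length from List.length_append,
          Finset.sum_range_add]
        congr 1
        · apply Finset.sum_congr rfl
          intro j hj
          have hj' : j + 1 ≤ x'.length := Finset.mem_range.mp hj
          rw [List.take_append_of_le_length hj', List.drop_append_of_le_length hj']
        · apply Finset.sum_congr rfl
          intro k hk
          rw [show x'.length + k + 1 = x'.length + (k + 1) by omega,
            List.take_append, List.take_of_length_le (by omega),
            show x'.length + (k + 1) - x'.length = k + 1 by omega,
            List.drop_append, List.drop_eq_nil_of_le (by omega),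
            show x'.length + (k + 1) - x'.length = k + 1 by omega, List.nil_append,
            ← List.cons_append]
      have hT3 : m (s (fT m s g t) (fL m s g x')) (fL m s g y) =
          ∑ j ∈ Finset.range x'.length,
            fL m s g (graftList (t :: x'.take (j + 1)) :: (x'.drop (j + 1) ++ y)) := by
        rw [succ_single m s g t hx', map_sum, LinearMap.sum_apply]
        apply Finset.sum_congr rfl
        intro j hj
        rw [← fL_append m s g hassoc _ (by simp) hy, List.cons_append]
      have hT2 : m (fT m s g t) (s (fL m s g x') (fL m s g y)) =
          ∑ k ∈ Finset.range y.length, ∑ i ∈ Finset.range x'.length,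
            fL m s g (t :: (x'.take (x'.length - (i + 1)) ++
              graftList (x'.drop (x'.length - (i + 1)) ++ y.take (k + 1)) :: y.drop (k + 1))) := by
        rw [ih hx', map_sum]
        apply Finset.sum_congr rfl
        intro k hk
        rw [map_sum]
        apply Finset.sum_congr rfl
        intro i hi
        rw [fL_cons m s g t (by simp)]
      rw [hT1, hT3, hT2]
      have hRHS : ∑ k ∈ Finset.range y.length, ∑ i ∈ Finset.range (t :: x').length,
          fL m s g ((t :: x').take ((t :: x').length - (i + 1)) ++
            graftList ((t :: x').drop ((t :: x').length - (i + 1)) ++ y.take (k + 1)) ::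
              y.drop (k + 1)) =
          (∑ k ∈ Finset.range y.length, ∑ i ∈ Finset.range x'.length,
            fL m s g (t :: (x'.take (x'.length - (i + 1)) ++
              graftList (x'.drop (x'.length - (i + 1)) ++ y.take (k + 1)) :: y.drop (k + 1))))
          + ∑ k ∈ Finset.range y.length,
            fL m s g (graftList ((t :: x') ++ y.take (k + 1)) :: y.drop (k + 1)) := by
        rw [← Finset.sum_add_distrib]
        apply Finset.sum_congr rfl
        intro k hk
        rw [show (t :: x').length = x'.length + 1 from rfl, Finset.sum_range_succ]
        congr 1
        · apply Finset.sum_congr rfl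
          intro i hi
          have hi' : i < x'.length := Finset.mem_range.mp hi
          rw [show x'.length + 1 - (i + 1) = (x'.length - (i + 1)) + 1 by omega,
            List.take_succ_cons, List.drop_succ_cons, List.cons_append]
        · rw [Nat.sub_self, List.take_zero, List.drop_zero, List.nil_append]
      rw [hRHS]
      abel

theorem fT_leaf : fT m s g .leaf = g := by rw [fT]

noncomputable def phiF : H R →ₗ[R] G := Finsupp.lift G R Forest fun w => fL m s g w.1

theorem phiF_single (w : Forest) (c : R) :
    phiF m s g (Finsupp.single w c) = c • fL m s g w.1 := by
  simp [phiF, Finsupp.lift_apply, Finsupp.sum_single_index]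

theorem mulH_single (x y : Forest) (a b : R) :
    mulH R (Finsupp.single x a) (Finsupp.single y b) =
      Finsupp.single (⟨x.1 ++ y.1, by simp [x.2]⟩ : Forest) (a * b) := by
  simp [mulH, Finsupp.lift_apply, Finsupp.sum_single_index, Finsupp.smul_single, smul_smul]

theorem succH_single (x y : Forest) (a b : R) :
    succH R (Finsupp.single x a) (Finsupp.single y b) = (a * b) • succForest R x y := by
  simp [succH, Finsupp.lift_apply, Finsupp.sum_single_index, smul_smul]

theorem phiF_succForest (hassoc : ∀ x y z : G, m (m x y) z = m x (m y z))
    (hcocycle : ∀ x y z : G, m (s x y) z + s (m x y) z = s x (m y z) + m x (s y z))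
    (x y : Forest) :
    phiF m s g (succForest R x y) = s (fL m s g x.1) (fL m s g y.1) := by
  rw [succForest]
  simp only [map_sum, phiF_single, one_smul]
  exact (main_lemma m s g hassoc hcocycle y.1 y.2 x.1 x.2).symm

theorem succForest_mk (xs ys : List PTree) (hxs : xs ≠ []) (hys : ys ≠ []) :
    succForest R (⟨xs, hxs⟩ : Forest) (⟨ys, hys⟩ : Forest) =
      ∑ k ∈ Finset.range ys.length, ∑ i ∈ Finset.range xs.length,
        Finsupp.single
          (⟨xs.take (xs.length - (i + 1)) ++
            graftList (xs.drop (xs.length - (i + 1)) ++ ys.take (k + 1)) :: ys.drop (k + 1),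
            by simp⟩ : Forest) 1 := rfl

theorem succForest_singleton (t : PTree) (ys : List PTree) (hys : ys ≠ []) :
    succForest R (⟨[t], by simp⟩ : Forest) (⟨ys, hys⟩ : Forest) =
      ∑ k ∈ Finset.range ys.length,
        Finsupp.single
          (⟨graftList (t :: ys.take (k + 1)) :: ys.drop (k + 1), by simp⟩ : Forest) 1 := by
  rw [succForest_mk]
  apply Finset.sum_congr rfl
  intro k hk
  simp only [List.length_singleton, Finset.sum_range_one, Nat.sub_self,
    List.take_zero, List.drop_zero, List.nil_append, List.singleton_append]

theorem uniq_single (ψ : H R →ₗ[R] G) (h1 : ψ (Finsupp.single leafF 1) = g)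
    (h2 : ∀ x y : H R, ψ (mulH R x y) = m (ψ x) (ψ y))
    (h3 : ∀ x y : H R, ψ (succH R x y) = s (ψ x) (ψ y)) :
    ∀ (n : ℕ) (w : Forest), 2 * leavesL w.1 + (if w.1.length = 1 then 1 else 0) ≤ n →
      ψ (Finsupp.single w 1) = fL m s g w.1 := by
  intro n
  induction n with
  | zero =>
    intro w hw
    exfalso
    have := one_le_leavesL w.2
    omega
  | succ n ihn =>
    intro w hw
    obtain ⟨l, hl⟩ := w
    cases l with
    | nil => exact absurd rfl hl
    | cons t ts =>
      cases ts with
      | cons t' ts' =>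
        have hN := hw
        simp only [leavesL_cons, List.length_cons] at hN
        have l1 := one_le_leavesT t
        have l2 := one_le_leavesT t'
        have l3 := one_le_leavesL (l := t' :: ts') (by simp)
        simp only [leavesL_cons] at l3
        have hmul := h2 (Finsupp.single (⟨[t], by simp⟩ : Forest) 1)
          (Finsupp.single (⟨t' :: ts', by simp⟩ : Forest) 1)
        rw [mulH_single, one_mul] at hmul
        have e : (⟨[t] ++ t' :: ts', by simp⟩ : Forest) = ⟨t :: t' :: ts', hl⟩ :=
          Subtype.ext rfl
        rw [e] at hmul
        have b1 : ψ (Finsupp.single (⟨[t], by simp⟩ : Forest) 1) = fL m s g [t] := by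
          apply ihn
          show 2 * leavesL [t] + (if ([t] : List PTree).length = 1 then 1 else 0) ≤ n
          have hc : leavesL [t] = leavesT t + leavesL ([] : List PTree) := leavesL_cons _ _
          have hz : leavesL ([] : List PTree) = 0 := rfl
          have hone : (if ([t] : List PTree).length = 1 then 1 else 0) = 1 := rfl
          omega
        have b2 : ψ (Finsupp.single (⟨t' :: ts', by simp⟩ : Forest) 1) =
            fL m s g (t' :: ts') := by
          apply ihn
          show 2 * leavesL (t' :: ts') + (if (t' :: ts').length = 1 then 1 else 0) ≤ n
          have hite : (if (t' :: ts').length = 1 then 1 else 0) ≤ 1 := by split <;> omega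
          have hc : leavesL (t' :: ts') = leavesT t' + leavesL ts' := leavesL_cons _ _
          omega
        rw [hmul, b1, b2]
        show (m (fL m s g [t])) (fL m s g (t' :: ts')) = fL m s g (t :: t' :: ts')
        rw [fL_singleton, ← fL_cons m s g t (by simp)]
      | nil =>
        cases t with
        | leaf =>
          have e : (⟨[PTree.leaf], hl⟩ : Forest) = leafF := Subtype.ext rfl
          rw [e, h1]
          show g = fL m s g [PTree.leaf]
          rw [fL_singleton, fT_leaf]
        | graft t₁ t₂ rest =>
          have hN := hw
          simp only [leavesL_cons, List.length_singleton, if_pos rfl] at hN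
          have hNval : leavesT (PTree.graft t₁ t₂ rest) =
              leavesT t₁ + leavesT t₂ + leavesL rest := by rw [leavesT]
          have l1 := one_le_leavesT t₁
          have l2 := one_le_leavesT t₂
          have hz : leavesL ([] : List PTree) = 0 := rfl
          have hc1 : (if True then 1 else 0) = 1 := rfl
          have hsucc := h3 (Finsupp.single (⟨[t₁], by simp⟩ : Forest) 1)
            (Finsupp.single (⟨t₂ :: rest, by simp⟩ : Forest) 1)
          rw [succH_single, one_mul, one_smul, succForest_singleton t₁ (t₂ :: rest) (by simp), map_sum] at hsucc
          have hlen : (((⟨t₂ :: rest, by simp⟩ : Forest) : Forest)).1.length = rest.length + 1 := rfl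
          rw [hlen, Finset.sum_range_succ] at hsucc
          have etake : (t₂ :: rest).take (rest.length + 1) = t₂ :: rest := by simp
          have edrop : (t₂ :: rest).drop (rest.length + 1) = [] := by simp
          have e2 : (⟨graftList (t₁ :: (t₂ :: rest).take (rest.length + 1)) ::
              (t₂ :: rest).drop (rest.length + 1), by simp⟩ : Forest) =
              ⟨[PTree.graft t₁ t₂ rest], hl⟩ := by
            apply Subtype.ext
            show graftList (t₁ :: (t₂ :: rest).take (rest.length + 1)) ::
              (t₂ :: rest).drop (rest.length + 1) = [PTree.graft t₁ t₂ rest]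
            rw [etake, edrop]
            rfl
          rw [e2] at hsucc
          -- rewrite the other ψ-values via ihn
          have hsum : ∀ k ∈ Finset.range rest.length,
              ψ (Finsupp.single
                (⟨graftList (t₁ :: (t₂ :: rest).take (k + 1)) ::
                  (t₂ :: rest).drop (k + 1), by simp⟩ : Forest) 1) =
              fL m s g (graftList (t₁ :: (t₂ :: rest).take (k + 1)) ::
                (t₂ :: rest).drop (k + 1)) := by
            intro k hk
            have hk' : k < rest.length := Finset.mem_range.mp hk
            apply ihn
            have hdk : (t₂ :: rest).drop (k + 1) ≠ [] := by
              simp only [ne_eq, List.drop_eq_nil_iff]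
              simp; omega
            have hgl : leavesT (graftList (t₁ :: (t₂ :: rest).take (k + 1))) =
                leavesT t₁ + leavesL ((t₂ :: rest).take (k + 1)) :=
              leavesT_graftList_cons _ (by simp)
            have htd := take_drop_leaves (t₂ :: rest) (k + 1)
            have hlen2 : (graftList (t₁ :: (t₂ :: rest).take (k + 1)) ::
                (t₂ :: rest).drop (k + 1)).length ≠ 1 := by
              simp only [List.length_cons]
              cases hh : (t₂ :: rest).drop (k + 1) with
              | nil => exact absurd hh hdk
              | cons u us => simp
            rw [if_neg hlen2]
            simp only [leavesL_cons] at *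
            rw [hgl]
            omega
          rw [Finset.sum_congr rfl hsum] at hsucc
          have ha : ψ (Finsupp.single (⟨[t₁], by simp⟩ : Forest) 1) = fL m s g [t₁] := by
            apply ihn
            simp only [List.length_singleton, if_pos rfl, leavesL_cons, leavesL]
            omega
          have hb : ψ (Finsupp.single (⟨t₂ :: rest, by simp⟩ : Forest) 1) =
              fL m s g (t₂ :: rest) := by
            apply ihn
            simp only [leavesL_cons, List.length_cons]
            split <;> omega
          rw [ha, hb, fL_singleton] at hsucc
          -- now use succ_single
          have hss := succ_single m s g t₁ (y := t₂ :: rest) (by simp)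
          have hlen3 : (t₂ :: rest).length = rest.length + 1 := rfl
          rw [hlen3, Finset.sum_range_succ, etake, edrop] at hss
          have e3 : graftList (t₁ :: t₂ :: rest) = PTree.graft t₁ t₂ rest := rfl
          rw [e3] at hss
          -- hss : s (fT t₁) (fL (t₂::rest)) = Σ + fL [graft t₁ t₂ rest]
          have := hsucc
          rw [hss] at this
          -- this : Σ + ψ (single w 1) = Σ + fL [graft ...]
          have goal := add_left_cancel this
          rw [goal]

end


end FreeHoch

/-- `(H K, *, ≻)` is the free Hoch-algebra on one generator: for
every Hoch-algebra `(G, m, s)` over `K` and every `g ∈ G`, there is a unique linear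
map `φ : H K → G` sending the leaf to `g` and respecting both operations. -/
theorem stmt2 (K : Type*) [Field K] (G : Type*) [AddCommGroup G] [Module K G]
    (m s : G →ₗ[K] G →ₗ[K] G)
    (hassoc : ∀ x y z : G, m (m x y) z = m x (m y z))
    (hcocycle : ∀ x y z : G,
      m (s x y) z + s (m x y) z = s x (m y z) + m x (s y z))
    (g : G) :
    ∃! φ : H K →ₗ[K] G,
      φ (Finsupp.single leafF 1) = g ∧
      (∀ x y : H K, φ (mulH K x y) = m (φ x) (φ y)) ∧
      (∀ x y : H K, φ (succH K x y) = s (φ x) (φ y)) := by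
  refine ⟨phiF m s g, ⟨?_, ?_, ?_⟩, ?_⟩
  · rw [phiF_single]
    show (1 : K) • fL m s g [PTree.leaf] = g
    rw [one_smul, fL_singleton, fT_leaf]
  · intro x y
    induction x using Finsupp.induction_linear with
    | zero => simp
    | add f h hf hh => simp only [map_add, LinearMap.add_apply, hf, hh]
    | single w a =>
      induction y using Finsupp.induction_linear with
      | zero => simp
      | add f h hf hh => simp only [map_add, hf, hh]
      | single v b =>
        rw [mulH_single, phiF_single, phiF_single, phiF_single]
        show (a * b) • fL m s g (w.1 ++ v.1) = _
        rw [fL_append m s g hassoc w.1 w.2 v.2]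
        simp [map_smul, LinearMap.smul_apply, smul_smul, mul_comm]
  · intro x y
    induction x using Finsupp.induction_linear with
    | zero => simp
    | add f h hf hh => simp only [map_add, LinearMap.add_apply, hf, hh]
    | single w a =>
      induction y using Finsupp.induction_linear with
      | zero => simp
      | add f h hf hh => simp only [map_add, hf, hh]
      | single v b =>
        rw [succH_single, map_smul, phiF_succForest m s g hassoc hcocycle,
          phiF_single, phiF_single]
        simp [map_smul, LinearMap.smul_apply, smul_smul, mul_comm]
  · rintro ψ ⟨h1, h2, h3⟩
    apply Finsupp.lhom_ext
    intro w c
    have key := uniq_single m s g ψ h1 h2 h3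
      (2 * leavesL w.1 + (if w.1.length = 1 then 1 else 0)) w le_rfl
    calc ψ (Finsupp.single w c) = ψ (c • Finsupp.single w 1) := by
          rw [Finsupp.smul_single, smul_eq_mul, mul_one]
      _ = c • ψ (Finsupp.single w 1) := map_smul ψ c _
      _ = c • fL m s g w.1 := by rw [key]
      _ = phiF m s g (Finsupp.single w c) := (phiF_single m s g w c).symm
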